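/- For every H ∈ (0,1) with H ≠ 1/2 and every integer k ≥ 0, with the convention 0^{H−1/2} = 0: Σ_{r=−∞}^{k} [ (k + 1 − r)^{H−1/2} − (k − r)^{H−1/2} ]² ≤ 1 + (H − 1/2)² + (H − 1/2)²/(2 − 2H); in particular the series converges. -/
import Mathlib

open Real Finset

/-- MVT for `x ^ q` on `[u, v]`. -/
private lemma rpow_mvt {u v q : ℝ} (hu : 0 < u) (huv : u < v) :
    ∃ c, u < c ∧ c < v ∧ v ^ q - u ^ q = q * c ^ (q - 1) * (v - u) := by
  obtain ⟨c, hc, hceq⟩ := exists_hasDerivAt_eq_slope (fun x => x ^ q)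
    (fun x => q * x ^ (q - 1)) huv
    (ContinuousOn.rpow_const continuousOn_id fun x hx =>
      Or.inl (ne_of_gt (lt_of_lt_of_le hu hx.1)))
    (fun x hx => Real.hasDerivAt_rpow_const (Or.inl (ne_of_gt (hu.trans hx.1))))
  refine ⟨c, hc.1, hc.2, ?_⟩
  rw [eq_div_iff (by linarith : v - u ≠ 0)] at hceq
  linarith [hceq]

/-- Upper slope bound. -/
private lemma rpow_diff_le {u v q : ℝ} (hu : 0 < u) (huv : u ≤ v) (hq : q < 1) :
    |v ^ q - u ^ q| ≤ |q| * (v - u) * u ^ (q - 1) := by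
  rcases eq_or_lt_of_le huv with rfl | huv
  · simp
  obtain ⟨c, hc1, hc2, hceq⟩ := rpow_mvt hu huv (q := q)
  rw [hceq, abs_mul, abs_mul, abs_of_pos (by linarith : (0:ℝ) < v - u)]
  have hc0 : 0 < c := hu.trans hc1
  have h1 : |c ^ (q - 1)| ≤ u ^ (q - 1) := by
    rw [abs_of_pos (Real.rpow_pos_of_pos hc0 _)]
    exact Real.rpow_le_rpow_of_nonpos hu hc1.le (by linarith)
  calc |q| * |c ^ (q - 1)| * (v - u) ≤ |q| * u ^ (q - 1) * (v - u) :=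
        mul_le_mul_of_nonneg_right (mul_le_mul_of_nonneg_left h1 (abs_nonneg q)) (by linarith)
    _ = |q| * (v - u) * u ^ (q - 1) := by ring

/-- Lower slope bound. -/
private lemma rpow_diff_ge {u v q : ℝ} (hu : 0 < u) (huv : u ≤ v) (hq : q < 0) :
    (-q) * (v - u) * v ^ (q - 1) ≤ u ^ q - v ^ q := by
  rcases eq_or_lt_of_le huv with rfl | huv
  · simp
  obtain ⟨c, hc1, hc2, hceq⟩ := rpow_mvt hu huv (q := q)
  have hc0 : 0 < c := hu.trans hc1
  have h1 : v ^ (q - 1) ≤ c ^ (q - 1) :=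
    Real.rpow_le_rpow_of_nonpos hc0 hc2.le (by linarith)
  have heq : u ^ q - v ^ q = (-q * c ^ (q - 1)) * (v - u) := by linarith [hceq]
  calc (-q) * (v - u) * v ^ (q - 1) = (-q * v ^ (q - 1)) * (v - u) := by ring
    _ ≤ (-q * c ^ (q - 1)) * (v - u) :=
        mul_le_mul_of_nonneg_right
          (mul_le_mul_of_nonneg_left h1 (by linarith)) (by linarith)
    _ = u ^ q - v ^ q := heq.symm

private lemma statement17_aux (a : ℝ) (ha0 : a ≠ 0) (ha1 : a < 1/2) (ha2 : -(1/2 : ℝ) < a)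
    (k : ℕ) :
    Summable (fun r : ℤ => if r ≤ (k : ℤ) then
      ((((k : ℤ) + 1 - r : ℤ) : ℝ) ^ a - (((k : ℤ) - r : ℤ) : ℝ) ^ a)^2 else 0) ∧
    ∑' r : ℤ, (if r ≤ (k : ℤ) then
      ((((k : ℤ) + 1 - r : ℤ) : ℝ) ^ a - (((k : ℤ) - r : ℤ) : ℝ) ^ a)^2 else 0)
      ≤ 1 + a^2 + a^2 / (1 - 2*a) := by
  have h12a : (0:ℝ) < 1 - 2*a := by linarith
  set f : ℤ → ℝ := fun r : ℤ => if r ≤ (k : ℤ) then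
      ((((k : ℤ) + 1 - r : ℤ) : ℝ) ^ a - (((k : ℤ) - r : ℤ) : ℝ) ^ a)^2 else 0 with hf_def
  set g : ℕ → ℝ := fun n => (((n:ℝ) + 1) ^ a - (n:ℝ) ^ a)^2 with hg_def
  have hg_nonneg : ∀ n, 0 ≤ g n := fun n => sq_nonneg _
  have key : ∀ x : ℝ, 1 ≤ x → ((x + 1) ^ a - x ^ a)^2 ≤ a^2 * x ^ (2*a - 2) := by
    intro x hx
    have hx0 : (0:ℝ) < x := by linarith
    have h := rpow_diff_le (u := x) (v := x + 1) (q := a) hx0 (by linarith) (by linarith)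
    have h2 : ((x+1) ^ a - x ^ a)^2 ≤ (|a| * (x + 1 - x) * x ^ (a - 1))^2 := by
      rw [← sq_abs]
      exact pow_le_pow_left₀ (abs_nonneg _) h 2
    have h3 : (|a| * (x + 1 - x) * x ^ (a - 1))^2 = a^2 * x ^ (2*a - 2) := by
      have hxx : (x ^ (a-1))^2 = x ^ (2*a - 2) := by
        rw [sq, ← Real.rpow_add hx0]; ring_nf
      rw [mul_pow, mul_pow, sq_abs, hxx]
      ring_nf
    rw [h3] at h2; exact h2
  set C : ℝ := a^2 / (1 - 2*a) with hC_def
  have hC0 : 0 ≤ C := div_nonneg (sq_nonneg a) h12a.le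
  have hg0 : g 0 = 1 := by simp [hg_def, Real.zero_rpow ha0]
  have hg1 : g 1 ≤ a^2 := by
    calc g 1 = (((1:ℝ) + 1) ^ a - (1:ℝ) ^ a)^2 := by norm_num [hg_def]
      _ ≤ a^2 * (1:ℝ) ^ (2*a - 2) := key 1 le_rfl
      _ = a^2 := by rw [Real.one_rpow, mul_one]
  have hsum : ∀ M : ℕ, ∑ n ∈ range (M + 2), g n + C * ((M:ℝ) + 1) ^ (2*a - 1) ≤
      1 + a^2 + C := by
    intro M
    induction M with
    | zero =>
      rw [Finset.sum_range_succ, Finset.sum_range_one, hg0]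
      push_cast
      rw [show (0:ℝ) + 1 = 1 by ring, Real.one_rpow, mul_one]
      linarith [hg1]
    | succ M ih =>
      rw [Finset.sum_range_succ]
      have hx1 : (1:ℝ) ≤ (M:ℝ) + 2 := by
        have := Nat.cast_nonneg (α := ℝ) M; linarith
      have hkey : g (M + 2) ≤ a^2 * ((M:ℝ) + 2) ^ (2*a - 2) := by
        have h := key ((M:ℝ) + 2) hx1
        simp only [hg_def]
        push_cast
        ring_nf at h ⊢
        exact h
      have htel := rpow_diff_ge (u := (M:ℝ) + 1) (v := (M:ℝ) + 2) (q := 2*a - 1)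
        (by positivity) (by linarith) (by linarith)
      have h1 : (-(2*a - 1)) * ((M:ℝ) + 2 - ((M:ℝ) + 1)) * ((M:ℝ)+2) ^ (2*a - 1 - 1)
          = (1 - 2*a) * ((M:ℝ)+2) ^ (2*a - 2) := by ring_nf
      rw [h1] at htel
      have h2 : a^2 * ((M:ℝ)+2) ^ (2*a-2) ≤
          C * (((M:ℝ)+1) ^ (2*a-1) - ((M:ℝ)+2) ^ (2*a-1)) := by
        rw [hC_def, div_mul_eq_mul_div, le_div_iff₀ h12a]
        nlinarith [sq_nonneg a]
      push_cast
      rw [show (M:ℝ) + 1 + 1 = (M:ℝ) + 2 by ring]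
      linarith [ih, hkey, h2]
  have hsum' : ∀ N : ℕ, ∑ n ∈ range N, g n ≤ 1 + a^2 + C := by
    intro N
    have h1 : ∑ n ∈ range N, g n ≤ ∑ n ∈ range (N + 2), g n :=
      Finset.sum_le_sum_of_subset_of_nonneg
        (Finset.range_subset_range.mpr (by omega)) (fun i _ _ => hg_nonneg i)
    have h3 : 0 ≤ C * ((N:ℝ) + 1) ^ (2*a - 1) :=
      mul_nonneg hC0 (Real.rpow_nonneg (by positivity) _)
    linarith [hsum N]
  have hg_summable : Summable g := summable_of_sum_range_le hg_nonneg hsum'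
  have hg_tsum : ∑' n, g n ≤ 1 + a^2 + C := Real.tsum_le_of_sum_range_le hg_nonneg hsum'
  set e : ℕ → ℤ := fun n => (k : ℤ) - n with he_def
  have he_inj : Function.Injective e := by
    intro m n h
    simp only [he_def] at h
    omega
  have he_comp : f ∘ e = g := by
    funext n
    simp only [hf_def, he_def, hg_def, Function.comp]
    rw [if_pos (by omega)]
    congr 2 <;> push_cast <;> ring
  have he_range : ∀ r : ℤ, r ∉ Set.range e → f r = 0 := by
    intro r hr
    have hnle : ¬ r ≤ (k : ℤ) := fun hle => hr ⟨(k - r).toNat, by simp only [he_def]; omega⟩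
    rw [hf_def]
    exact if_neg hnle
  have hf_summable : Summable f := by
    rw [← Function.Injective.summable_iff he_inj he_range, he_comp]
    exact hg_summable
  have htsum_eq : ∑' r : ℤ, f r = ∑' n, g n := by
    rw [← Function.Injective.tsum_eq he_inj (f := f) ?_]
    · exact tsum_congr fun n => congrFun he_comp n
    · intro r hr
      by_contra h
      exact (Function.mem_support.mp hr) (he_range r h)
  exact ⟨hf_summable, htsum_eq ▸ hg_tsum⟩

/-- For every `H ∈ (0,1)` with `H ≠ 1/2` and every integer `k ≥ 0`, with the
convention `0^{H−1/2} = 0` (which is automatic for `Real.rpow` since `H − 1/2 ≠ 0`),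
`Σ_{r=−∞}^{k} [ (k+1−r)^{H−1/2} − (k−r)^{H−1/2} ]² ≤ 1 + (H−1/2)² + (H−1/2)²/(2−2H)`;
in particular the series converges.  The sum over the integers `r ≤ k` is realized as a
`tsum` over `r : ℤ`, the summand vanishing for `r > k`. -/
theorem statement17 (H : ℝ) (hH0 : 0 < H) (hH1 : H < 1) (hHhalf : H ≠ 1/2)
    (k : ℕ) :
    Summable (fun r : ℤ => if r ≤ (k : ℤ) then
      ((((k : ℤ) + 1 - r : ℤ) : ℝ) ^ (H - 1/2) - (((k : ℤ) - r : ℤ) : ℝ) ^ (H - 1/2))^2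
      else 0) ∧
    ∑' r : ℤ, (if r ≤ (k : ℤ) then
      ((((k : ℤ) + 1 - r : ℤ) : ℝ) ^ (H - 1/2) - (((k : ℤ) - r : ℤ) : ℝ) ^ (H - 1/2))^2
      else 0)
      ≤ 1 + (H - 1/2)^2 + (H - 1/2)^2 / (2 - 2*H) := by
  have h := statement17_aux (H - 1/2) (sub_ne_zero.mpr hHhalf) (by linarith) (by linarith) k
  have heq : (1:ℝ) - 2*(H - 1/2) = 2 - 2*H := by ring
  rw [heq] at h
  exact h
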